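/- In the Drasin–Sastry parameter construction, the sequence (r_n)_{n ≥ n₀} is well defined and strictly increasing, and moreover r_{n+1} ≥ r_n^{n₀} for every n ≥ n₀. -/

import Mathlib

open Real MeasureTheory intervalIntegral

namespace DrasinSastry

noncomputable def J (a b : ℝ) (n : ℕ) : ℝ := ∫ t in a..b, ((t - a) / (b - a) + n) / t

noncomputable def q (n₀ : ℕ) (R' : ℝ) : ℕ → ℝ × ℝ
  | 0 => (R', n₀ * Real.log R')
  | k + 1 =>
      (Real.exp (q n₀ R' k).2,
       (q n₀ R' k).2 + J (q n₀ R' k).1 (Real.exp (q n₀ R' k).2) (n₀ + k))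

noncomputable def rr (n₀ : ℕ) (R' : ℝ) (k : ℕ) : ℝ := (q n₀ R' k).1
noncomputable def II (n₀ : ℕ) (R' : ℝ) (k : ℕ) : ℝ := (q n₀ R' k).2

variable {n₀ : ℕ} {R' : ℝ}

lemma rr_zero : rr n₀ R' 0 = R' := rfl
lemma II_zero : II n₀ R' 0 = n₀ * Real.log R' := rfl
lemma rr_succ (k : ℕ) : rr n₀ R' (k+1) = Real.exp (II n₀ R' k) := rfl
lemma II_succ (k : ℕ) :
    II n₀ R' (k+1) = II n₀ R' k + J (rr n₀ R' k) (rr n₀ R' (k+1)) (n₀+k) := rfl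

lemma lin_integrable {a b : ℝ} (ha : 0 < a) (hab : a ≤ b) (n : ℕ) :
    IntervalIntegrable (fun t => ((t - a) / (b - a) + n) / t) volume a b := by
  apply ContinuousOn.intervalIntegrable
  apply ContinuousOn.div
  · fun_prop
  · fun_prop
  · intro t ht
    rw [Set.uIcc_of_le hab] at ht
    exact ne_of_gt (lt_of_lt_of_le ha ht.1)

lemma const_div_integrable {a b : ℝ} (ha : 0 < a) (hab : a ≤ b) (c : ℝ) :
    IntervalIntegrable (fun t => c / t) volume a b := by
  apply ContinuousOn.intervalIntegrable
  apply ContinuousOn.div continuousOn_const continuousOn_id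
  intro t ht
  rw [Set.uIcc_of_le hab] at ht
  exact ne_of_gt (lt_of_lt_of_le ha ht.1)

lemma integral_const_div {a b c : ℝ} (ha : 0 < a) (hab : a ≤ b) :
    (∫ t in a..b, c / t) = c * (Real.log b - Real.log a) := by
  have h0 : (0:ℝ) ∉ Set.uIcc a b := by
    rw [Set.uIcc_of_le hab]; intro h; exact absurd h.1 (by linarith)
  have : (∫ t in a..b, c / t) = c * ∫ t in a..b, 1 / t := by
    rw [← intervalIntegral.integral_const_mul]
    congr 1; ext t; ring
  rw [this, integral_one_div h0, Real.log_div (by linarith : b ≠ 0) (by linarith : a ≠ 0)]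

lemma J_ge {a b : ℝ} (ha : 0 < a) (hab : a < b) (n : ℕ) :
    (n : ℝ) * (Real.log b - Real.log a) ≤ J a b n := by
  have h1 : (∫ t in a..b, (n : ℝ) / t) ≤ J a b n := by
    apply integral_mono_on hab.le (const_div_integrable ha hab.le _)
      (lin_integrable ha hab.le n)
    intro t ht
    have ht0 : 0 < t := lt_of_lt_of_le ha ht.1
    have hd : 0 ≤ (t - a) / (b - a) := div_nonneg (by linarith [ht.1]) (by linarith)
    gcongr
    linarith
  calc (n : ℝ) * (Real.log b - Real.log a) = ∫ t in a..b, (n:ℝ) / t :=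
        (integral_const_div ha hab.le).symm
    _ ≤ J a b n := h1

lemma invariant (hn₀ : 2 ≤ n₀) (hR' : 4 < R') (k : ℕ) :
    R' ≤ rr n₀ R' k ∧ (n₀ : ℝ) * Real.log (rr n₀ R' k) ≤ II n₀ R' k := by
  induction k with
  | zero => exact ⟨le_refl _, le_of_eq rfl⟩
  | succ k ih =>
    set a := rr n₀ R' k with ha_def
    have ha4 : 4 < a := lt_of_lt_of_le hR' ih.1
    have ha1 : 1 ≤ a := by linarith
    have hpow : a ^ n₀ ≤ rr n₀ R' (k+1) := by
      rw [rr_succ]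
      calc a ^ n₀ = Real.exp ((n₀ : ℝ) * Real.log a) := by
            rw [Real.exp_nat_mul, Real.exp_log (by linarith)]
        _ ≤ Real.exp (II n₀ R' k) := Real.exp_le_exp.mpr ih.2
    have hsq : a ^ 2 ≤ a ^ n₀ := pow_le_pow_right₀ ha1 hn₀
    have hlt : a < rr n₀ R' (k+1) := by nlinarith [hpow, hsq]
    constructor
    · linarith
    · rw [II_succ]
      set b := rr n₀ R' (k+1) with hb_def
      have hJ : (↑(n₀+k) : ℝ) * (Real.log b - Real.log a) ≤ J a b (n₀+k) :=
        J_ge (by linarith) hlt _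
      have hlog : Real.log a ≤ Real.log b :=
        Real.log_le_log (by linarith) hlt.le
      have h2 : (n₀ : ℝ) * (Real.log b - Real.log a) ≤ (↑(n₀+k) : ℝ) * (Real.log b - Real.log a) := by
        apply mul_le_mul_of_nonneg_right _ (by linarith)
        push_cast; linarith
      nlinarith [ih.2]

lemma rr_four (hn₀ : 2 ≤ n₀) (hR' : 4 < R') (k : ℕ) : 4 < rr n₀ R' k :=
  lt_of_lt_of_le hR' (invariant hn₀ hR' k).1

lemma rr_pow_le (hn₀ : 2 ≤ n₀) (hR' : 4 < R') (k : ℕ) :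
    rr n₀ R' k ^ n₀ ≤ rr n₀ R' (k+1) := by
  rw [rr_succ]
  calc rr n₀ R' k ^ n₀ = Real.exp ((n₀ : ℝ) * Real.log (rr n₀ R' k)) := by
        rw [Real.exp_nat_mul, Real.exp_log (by linarith [rr_four hn₀ hR' k])]
    _ ≤ _ := Real.exp_le_exp.mpr (invariant hn₀ hR' k).2

lemma rr_lt_succ (hn₀ : 2 ≤ n₀) (hR' : 4 < R') (k : ℕ) :
    rr n₀ R' k < rr n₀ R' (k+1) := by
  have h4 := rr_four hn₀ hR' k
  have := rr_pow_le hn₀ hR' k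
  have hsq : rr n₀ R' k ^ 2 ≤ rr n₀ R' k ^ n₀ := pow_le_pow_right₀ (by linarith) hn₀
  nlinarith

lemma rr_mono (hn₀ : 2 ≤ n₀) (hR' : 4 < R') : StrictMono (rr n₀ R') :=
  strictMono_nat_of_lt_succ (rr_lt_succ hn₀ hR')

lemma rr_unbounded (hn₀ : 2 ≤ n₀) (hR' : 4 < R') (k : ℕ) :
    R' + k ≤ rr n₀ R' k := by
  induction k with
  | zero => simp [rr_zero]
  | succ k ih =>
    have h4 := rr_four hn₀ hR' k
    have hp := rr_pow_le hn₀ hR' k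
    have hsq : rr n₀ R' k ^ 2 ≤ rr n₀ R' k ^ n₀ := pow_le_pow_right₀ (by linarith) hn₀
    push_cast
    nlinarith


lemma intInt_congr {f g : ℝ → ℝ} {a b : ℝ}
    (hf : IntervalIntegrable f volume a b) (h : Set.EqOn f g (Set.uIcc a b)) :
    IntervalIntegrable g volume a b := by
  rw [intervalIntegrable_iff] at hf ⊢
  exact hf.congr_fun (fun x hx => h (Set.uIoc_subset_uIcc hx)) measurableSet_uIoc

open Classical in
noncomputable def nu (n₀ : ℕ) (R' : ℝ) (t : ℝ) : ℝ :=
  if t ≤ R' then (n₀ : ℝ)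
  else if h2 : ∃ k, t ≤ rr n₀ R' (k+1) then
    (t - rr n₀ R' (Nat.find h2)) / (rr n₀ R' (Nat.find h2 + 1) - rr n₀ R' (Nat.find h2))
      + (n₀ + Nat.find h2 : ℕ)
  else 0

lemma nu_of_le (t : ℝ) (h : t ≤ R') : nu n₀ R' t = n₀ := by
  rw [nu, if_pos h]

lemma nu_eq (hn₀ : 2 ≤ n₀) (hR' : 4 < R') (k : ℕ) (t : ℝ)
    (h1 : rr n₀ R' k ≤ t) (h2 : t ≤ rr n₀ R' (k+1)) :
    nu n₀ R' t = (t - rr n₀ R' k) / (rr n₀ R' (k+1) - rr n₀ R' k) + (n₀ + k : ℕ) := by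
  classical
  have hmono := rr_mono hn₀ hR'
  by_cases hle : t ≤ R'
  · have hk : R' ≤ rr n₀ R' k := (invariant hn₀ hR' k).1
    have ht : t = R' := le_antisymm hle (le_trans hk h1)
    have hrk : rr n₀ R' k = R' := le_antisymm (by linarith) hk
    have hk0 : k = 0 := by
      by_contra h
      have h0 : rr n₀ R' 0 < rr n₀ R' k := hmono (Nat.pos_of_ne_zero h)
      rw [rr_zero, hrk] at h0; exact lt_irrefl _ h0
    rw [nu_of_le t hle]
    subst hk0
    rw [ht, hrk]
    simp
  · push_neg at hle
    have hex : ∃ j, t ≤ rr n₀ R' (j+1) := ⟨k, h2⟩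
    rw [nu, if_neg (not_le.mpr hle), dif_pos hex]
    set m := Nat.find hex with hm
    have hm2 : t ≤ rr n₀ R' (m+1) := Nat.find_spec hex
    have hmlt : rr n₀ R' m < t := by
      rcases Nat.eq_zero_or_pos m with h0 | h0
      · rw [h0, rr_zero]; exact hle
      · have hmin := Nat.find_min hex (m := m - 1) (by omega)
        push_neg at hmin
        have he : m - 1 + 1 = m := by omega
        rwa [he] at hmin
    rcases lt_trichotomy m k with h | h | h
    · have hle2 : rr n₀ R' (m+1) ≤ rr n₀ R' k := hmono.monotone (by omega)
      have ht : t = rr n₀ R' (m+1) := le_antisymm hm2 (le_trans hle2 h1)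
      have htk : t = rr n₀ R' k := le_antisymm (ht ▸ hle2) h1
      have hkm : k = m + 1 := hmono.injective (by rw [← htk, ht])
      have hΔm : rr n₀ R' (m+1) - rr n₀ R' m ≠ 0 :=
        ne_of_gt (sub_pos.mpr (rr_lt_succ hn₀ hR' m))
      subst hkm
      rw [htk]
      rw [show rr n₀ R' (m+1) - rr n₀ R' m = rr n₀ R' (m+1) - rr n₀ R' m from rfl]
      rw [sub_self, zero_div, div_self hΔm]
      push_cast; ring
    · subst h; rfl
    · exfalso
      have : rr n₀ R' (k+1) ≤ rr n₀ R' m := hmono.monotone (by omega)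
      linarith

lemma integral_nu (hn₀ : 2 ≤ n₀) (hR' : 4 < R') (k : ℕ) :
    IntervalIntegrable (fun t => nu n₀ R' t / t) volume 1 (rr n₀ R' k) ∧
    (∫ t in (1:ℝ)..rr n₀ R' k, nu n₀ R' t / t) = II n₀ R' k := by
  induction k with
  | zero =>
    have h1R : (1:ℝ) ≤ rr n₀ R' 0 := by rw [rr_zero]; linarith
    have heq : Set.EqOn (fun t => (n₀:ℝ) / t) (fun t => nu n₀ R' t / t)
        (Set.uIcc 1 (rr n₀ R' 0)) := by
      intro t ht
      rw [Set.uIcc_of_le h1R, rr_zero] at ht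
      simp only [nu_of_le t ht.2]
    refine ⟨(const_div_integrable one_pos h1R _ |> (intInt_congr · heq)), ?_⟩
    rw [intervalIntegral.integral_congr heq.symm, integral_const_div one_pos h1R,
      rr_zero, Real.log_one, II_zero]
    ring
  | succ k ih =>
    set a := rr n₀ R' k with ha_def
    set b := rr n₀ R' (k+1) with hb_def
    have hab : a < b := rr_lt_succ hn₀ hR' k
    have ha0 : 0 < a := by linarith [rr_four hn₀ hR' k]
    have heq2 : Set.EqOn (fun t => ((t - a) / (b - a) + (↑(n₀+k) : ℝ)) / t)
        (fun t => nu n₀ R' t / t) (Set.uIcc a b) := by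
      intro t ht
      rw [Set.uIcc_of_le hab.le] at ht
      simp only [nu_eq hn₀ hR' k t ht.1 ht.2]
      rfl
    have hint2 : IntervalIntegrable (fun t => nu n₀ R' t / t) volume a b :=
      intInt_congr (lin_integrable ha0 hab.le (n₀+k)) heq2
    refine ⟨ih.1.trans hint2, ?_⟩
    rw [← integral_add_adjacent_intervals ih.1 hint2, ih.2,
      intervalIntegral.integral_congr heq2.symm]
    exact (II_succ k).symm

end DrasinSastry


/-- The Drasin–Sastry parameter construction: given an integer `n₀ ≥ 2` and a real
`R' > 4`, there exist `ν : ℝ → ℝ` and a sequence `r : ℕ → ℝ` with `ν = n₀` on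
`[0, R']`, `r n₀ = R'`, `r (n+1) = exp (∫_1^{r n} ν(t)/t dt)` for `n ≥ n₀`, and
`ν` linear from `n` to `n+1` on `[r n, r (n+1)]`; i.e. the construction is well
defined. Moreover the sequence `(r n)` is strictly increasing for `n ≥ n₀` and
satisfies `r (n+1) ≥ (r n) ^ n₀`. -/
theorem drasinSastry_well_defined (n₀ : ℕ) (hn₀ : 2 ≤ n₀) (R' : ℝ) (hR' : 4 < R') :
    ∃ (ν : ℝ → ℝ) (r : ℕ → ℝ),
      (∀ t : ℝ, 0 ≤ t → t ≤ R' → ν t = n₀) ∧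
      r n₀ = R' ∧
      (∀ n : ℕ, n₀ ≤ n → r (n + 1) = Real.exp (∫ t in (1 : ℝ)..(r n), ν t / t)) ∧
      (∀ n : ℕ, n₀ ≤ n → ∀ t : ℝ, r n ≤ t → t ≤ r (n + 1) →
        ν t = (t - r n) / (r (n + 1) - r n) + n) ∧
      (∀ n : ℕ, n₀ ≤ n → r n < r (n + 1) ∧ (r n) ^ n₀ ≤ r (n + 1)) := by
  open DrasinSastry in
  refine ⟨nu n₀ R', fun n => rr n₀ R' (n - n₀), ?_, ?_, ?_, ?_, ?_⟩
  · intro t _ ht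
    exact nu_of_le t ht
  · show rr n₀ R' (n₀ - n₀) = R'
    rw [Nat.sub_self]; rfl
  · intro n hn
    show rr n₀ R' (n + 1 - n₀) = _
    have h1 : n + 1 - n₀ = (n - n₀) + 1 := by omega
    rw [h1, rr_succ, (integral_nu hn₀ hR' (n - n₀)).2]
  · intro n hn t h1 h2
    have hk : n + 1 - n₀ = (n - n₀) + 1 := by omega
    simp only [hk] at h2 ⊢
    rw [nu_eq hn₀ hR' (n - n₀) t h1 h2]
    congr 1
    have : n₀ + (n - n₀) = n := by omega
    rw [this]
  · intro n hn
    have hk : n + 1 - n₀ = (n - n₀) + 1 := by omega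
    simp only [hk]
    exact ⟨rr_lt_succ hn₀ hR' _, rr_pow_le hn₀ hR' _⟩
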